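/- arXiv:2602.04211 — 4 statements merged into one kernel-verified Lean document; each statement's English description precedes it below -/
import Mathlib

section
/- Let E be a field containing F_q, let N ≥ 1, and let u ∈ (E^sep)^N be a column vector whose entries are F_q-linearly independent and such that u^(N) lies in the E-span of u, u^(1), ..., u^(N-1). Let M(u) = [u, u^(1), ..., u^(N-1)] be the N×N Moore matrix. Then M(u)^{-1} M(u)^(1) equals the companion-type matrix Φ with subdiagonal 1's and last column (f_0,...,f_{N-1})^T = M(u)^{-1} u^(N); in particular Φ is invertible and f_0 = (-1)^{N-1} (det M(u))^{q-1} ≠ 0. -/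
open Matrix Polynomial

/-- The Moore determinant of an `F_q`-linearly independent family is nonzero. -/
theorem moore_det_ne_zero (Fq Esep : Type*) [Field Fq] [Fintype Fq] [Field Esep]
    [Algebra Fq Esep] :
    ∀ (n : ℕ) (u : Fin n → Esep), LinearIndependent Fq u →
      (Matrix.of fun i j : Fin n => u i ^ Fintype.card Fq ^ (j : ℕ)).det ≠ 0 := by
  classical
  have hq2 : 1 < Fintype.card Fq := Fintype.one_lt_card
  intro n
  induction n with
  | zero => intro u _; simp [Matrix.det_fin_zero]
  | succ n ih =>
    intro u hLI hdet
    set q := Fintype.card Fq with hqdef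
    -- characteristic facts
    obtain ⟨p, hchar⟩ := CharP.exists Fq
    haveI := hchar
    have hp : p.Prime := CharP.char_is_prime Fq p
    haveI : Fact p.Prime := ⟨hp⟩
    obtain ⟨k, -, hcard⟩ := FiniteField.card Fq p
    haveI : CharP Esep p := charP_of_injective_algebraMap' (A := Esep) Fq p
    haveI : ExpChar Esep p := ExpChar.prime hp
    have hqm : ∀ (m : ℕ) (x : Esep), x ^ q ^ m = iterateFrobenius Esep p ((k : ℕ) * m) x := by
      intro m x
      rw [iterateFrobenius_def, pow_mul, ← hcard]
    have frob : ∀ (m : ℕ) (c : Fq) (x : Esep), (c • x) ^ q ^ m = c • x ^ q ^ m := by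
      intro m c x
      rw [Algebra.smul_def, Algebra.smul_def, mul_pow, ← map_pow,
        FiniteField.pow_card_pow]
    have row_lin : ∀ (d : Fin (n + 1) → Fq) (m : ℕ),
        (∑ k, d k • u k) ^ q ^ m = ∑ k, d k • u k ^ q ^ m := by
      intro d m
      rw [hqm, map_sum]
      refine Finset.sum_congr rfl fun k _ => ?_
      rw [← hqm, frob]
    set M : Matrix (Fin (n + 1)) (Fin (n + 1)) Esep :=
      Matrix.of fun i j => u i ^ q ^ (j : ℕ) with hM
    -- cofactors along the last row
    set c : Fin (n + 1) → Esep := fun j =>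
      (-1 : Esep) ^ (n + (j : ℕ)) *
        (M.submatrix (Fin.last n).succAbove j.succAbove).det with hc
    set P : Esep[X] := ∑ j : Fin (n + 1), C (c j) * X ^ q ^ (j : ℕ) with hP
    have heval : ∀ x : Esep,
        P.eval x = (M.updateRow (Fin.last n) fun j => x ^ q ^ (j : ℕ)).det := by
      intro x
      rw [Matrix.det_succ_row _ (Fin.last n)]
      rw [hP, eval_finset_sum]
      refine Finset.sum_congr rfl fun j _ => ?_
      have hsub : (M.updateRow (Fin.last n) fun j => x ^ q ^ (j : ℕ)).submatrix
          (Fin.last n).succAbove j.succAbove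
          = M.submatrix (Fin.last n).succAbove j.succAbove := by
        ext a b
        rw [Matrix.submatrix_apply, Matrix.submatrix_apply,
          Matrix.updateRow_ne (Fin.succAbove_ne (Fin.last n) a)]
      rw [hsub]
      simp only [eval_mul, eval_C, eval_pow, eval_X, Matrix.updateRow_self, hc,
        Fin.val_last]
      ring
    -- the leading coefficient is the Moore determinant of the truncated family
    have hclast : c (Fin.last n)
        = (Matrix.of fun i j : Fin n =>
            (u ∘ Fin.castSucc) i ^ Fintype.card Fq ^ (j : ℕ)).det := by
      have h1 : ((-1 : Esep)) ^ (n + (Fin.last n : ℕ)) = 1 := by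
        rw [Fin.val_last, ← two_mul, pow_mul]
        norm_num
      have h2 : M.submatrix (Fin.last n).succAbove (Fin.last n).succAbove
          = Matrix.of fun i j : Fin n =>
              (u ∘ Fin.castSucc) i ^ Fintype.card Fq ^ (j : ℕ) := by
        ext a b
        simp [Matrix.submatrix_apply, Fin.succAbove_last, hM, hqdef]
      rw [hc]
      simp only [h2, h1, one_mul]
    have hA : c (Fin.last n) ≠ 0 := by
      rw [hclast]
      exact ih (u ∘ Fin.castSucc)
        (hLI.comp Fin.castSucc (Fin.castSucc_injective n))
    have hcoeff : P.coeff (q ^ n) = c (Fin.last n) := by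
      rw [hP, finset_sum_coeff]
      rw [Finset.sum_eq_single (Fin.last n)]
      · simp [coeff_C_mul, coeff_X_pow, Fin.val_last]
      · intro j _ hj
        have hne : q ^ n ≠ q ^ (j : ℕ) := by
          intro h
          exact hj (Fin.val_injective
            (Nat.pow_right_injective hq2 h.symm : (j : ℕ) = n))
        simp [coeff_C_mul, coeff_X_pow, if_neg hne]
      · simp
    have hP0 : P ≠ 0 := fun h => hA (by rw [← hcoeff, h, coeff_zero])
    have hdeg : P.natDegree ≤ q ^ n := by
      refine Polynomial.natDegree_sum_le_of_forall_le _ _ fun j _ => ?_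
      refine (Polynomial.natDegree_C_mul_le _ _).trans ?_
      rw [Polynomial.natDegree_X_pow]
      exact Nat.pow_le_pow_right (Nat.one_le_of_lt hq2) j.is_le
    -- every element of the span is a root
    have hroot : ∀ x ∈ Submodule.span Fq (Set.range u), P.eval x = 0 := by
      intro x hx
      rw [Submodule.mem_span_range_iff_exists_fun] at hx
      obtain ⟨d, hd⟩ := hx
      rw [heval]
      have hrow : (fun j : Fin (n + 1) => x ^ q ^ (j : ℕ))
          = ∑ k, algebraMap Fq Esep (d k) • M k := by
        funext j
        rw [← hd, row_lin]
        simp only [Finset.sum_apply, Pi.smul_apply]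
        refine Finset.sum_congr rfl fun k _ => ?_
        rw [Algebra.smul_def, Algebra.smul_def]
        rfl
      rw [hrow, Matrix.det_updateRow_sum, hdet, smul_zero]
    -- counting argument
    set V := Submodule.span Fq (Set.range u) with hV
    haveI : FiniteDimensional Fq V :=
      FiniteDimensional.span_of_finite Fq (Set.finite_range u)
    haveI : Finite V := Module.finite_of_finite Fq
    haveI : Fintype V := Fintype.ofFinite _
    have hcardV : Fintype.card V = q ^ (n + 1) := by
      rw [Module.card_eq_pow_finrank (K := Fq) (V := V), finrank_span_eq_card hLI,
        Fintype.card_fin]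
    have hmemroots : ∀ x : V, (x : Esep) ∈ P.roots.toFinset := by
      intro x
      rw [Multiset.mem_toFinset, Polynomial.mem_roots hP0]
      exact hroot x x.2
    have hinj : Fintype.card V ≤ P.roots.toFinset.card := by
      have := Fintype.card_le_of_injective
        (fun x : V => (⟨(x : Esep), hmemroots x⟩ : P.roots.toFinset))
        (fun a b h => Subtype.ext (by simpa using congrArg Subtype.val h))
      rwa [Fintype.card_coe] at this
    have hle : q ^ (n + 1) ≤ q ^ n :=
      calc q ^ (n + 1) = Fintype.card V := hcardV.symm
        _ ≤ P.roots.toFinset.card := hinj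
        _ ≤ Multiset.card P.roots := Multiset.toFinset_card_le _
        _ ≤ P.natDegree := P.card_roots'
        _ ≤ q ^ n := hdeg
    have : q ^ n < q ^ (n + 1) := Nat.pow_lt_pow_succ hq2
    omega

/-- For a fundamental solution `u` (entries `F_q`-linearly independent, with `u^(N)`
in the `E`-span of `u, u^(1), …, u^(N-1)`), the matrix `M(u)⁻¹ M(u)^(1)` is the
companion-type matrix `Φ` with subdiagonal `1`'s and last column
`(f_0,…,f_{N-1})ᵀ = M(u)⁻¹ u^(N)`; in particular `Φ` is invertible and
`f_0 = (-1)^{N-1} (det M(u))^{q-1} ≠ 0`. -/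
theorem stmt_5 (Fq E Esep : Type*) [Field Fq] [Fintype Fq] [Field E] [Field Esep]
    [Algebra Fq E] [Algebra E Esep] [Algebra Fq Esep] [IsScalarTower Fq E Esep]
    (N : ℕ) (hN : 0 < N) (u : Fin N → Esep)
    (hLI : LinearIndependent Fq u)
    (hspan : (fun i => u i ^ Fintype.card Fq ^ N) ∈
      Submodule.span E (Set.range fun j : Fin N => fun i => u i ^ Fintype.card Fq ^ (j : ℕ))) :
    let q := Fintype.card Fq
    let M : Matrix (Fin N) (Fin N) Esep := Matrix.of fun i j => u i ^ q ^ (j : ℕ)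
    let f : Fin N → Esep := M⁻¹ *ᵥ fun i => u i ^ q ^ N
    let Φ : Matrix (Fin N) (Fin N) Esep := Matrix.of fun i j =>
      if (j : ℕ) = N - 1 then f i else if (i : ℕ) = (j : ℕ) + 1 then 1 else 0
    M⁻¹ * (Matrix.of fun i j => M i j ^ q) = Φ ∧ IsUnit Φ ∧
      f ⟨0, hN⟩ = (-1) ^ (N - 1) * M.det ^ (q - 1) ∧ f ⟨0, hN⟩ ≠ 0 := by
  obtain ⟨n, rfl⟩ : ∃ n, N = n + 1 := ⟨N - 1, (Nat.succ_pred_eq_of_pos hN).symm⟩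
  intro q M f Φ
  clear hspan
  have hq2 : 1 < q := Fintype.one_lt_card
  have hdet : M.det ≠ 0 := moore_det_ne_zero Fq Esep (n + 1) u hLI
  have hMunit : IsUnit M.det := hdet.isUnit
  obtain ⟨p, hchar⟩ := CharP.exists Fq
  haveI := hchar
  have hp : p.Prime := CharP.char_is_prime Fq p
  haveI : Fact p.Prime := ⟨hp⟩
  obtain ⟨k, -, hcard⟩ := FiniteField.card Fq p
  haveI : CharP Esep p := charP_of_injective_algebraMap' (A := Esep) Fq p
  haveI : ExpChar Esep p := ExpChar.prime hp
  have hq : q = p ^ (k : ℕ) := hcard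
  have hφ : ∀ x : Esep, x ^ q = iterateFrobenius Esep p (k : ℕ) x := by
    intro x
    rw [hq, iterateFrobenius_def]
  have hf : M *ᵥ f = fun i => u i ^ q ^ (n + 1) := by
    show M *ᵥ (M⁻¹ *ᵥ _) = _
    rw [Matrix.mulVec_mulVec, Matrix.mul_nonsing_inv M hMunit, Matrix.one_mulVec]
  have hM1 : (Matrix.of fun i j => M i j ^ q) = M * Φ := by
    ext i j
    rw [Matrix.mul_apply]
    by_cases hj : (j : ℕ) = n
    · have hΦ : ∀ kk : Fin (n + 1), Φ kk j = f kk := by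
        intro kk
        simp [Φ, hj]
      calc (Matrix.of fun i j => M i j ^ q) i j = u i ^ q ^ (n + 1) := by
            simp only [Matrix.of_apply, M, ← pow_mul, ← pow_succ, hj]
        _ = (M *ᵥ f) i := by rw [hf]
        _ = ∑ kk, M i kk * Φ kk j := by
            simp [Matrix.mulVec, dotProduct, hΦ]
    · have hlt : (j : ℕ) + 1 < n + 1 := by
        have := j.isLt
        omega
      have hΦ : ∀ kk : Fin (n + 1), Φ kk j
          = if kk = ⟨(j : ℕ) + 1, hlt⟩ then 1 else 0 := by
        intro kk
        simp only [Φ, Matrix.of_apply, Nat.add_sub_cancel, if_neg hj, Fin.ext_iff]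
      calc (Matrix.of fun i j => M i j ^ q) i j = M i ⟨(j : ℕ) + 1, hlt⟩ := by
            simp only [Matrix.of_apply, M, ← pow_mul, ← pow_succ]
        _ = ∑ kk, M i kk * Φ kk j := by
            simp [hΦ, mul_ite]
  have hdetmap : (Matrix.of fun i j => M i j ^ q).det = M.det ^ q := by
    have hmap : (Matrix.of fun i j => M i j ^ q)
        = M.map (iterateFrobenius Esep p (k : ℕ)) := by
      ext i j
      rw [Matrix.map_apply, Matrix.of_apply, hφ]
    rw [hmap, ← RingHom.mapMatrix_apply, ← RingHom.map_det, ← hφ]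
  have h2 : M.det * Φ.det = M.det ^ q := by
    rw [← Matrix.det_mul, ← hM1, hdetmap]
  have h3 : M.det ^ q = M.det * M.det ^ (q - 1) := by
    rw [← pow_succ']
    congr 1
    omega
  have hdetΦ : Φ.det = M.det ^ (q - 1) :=
    mul_left_cancel₀ hdet (h2.trans h3)
  -- Laplace expansion of `Φ.det` along the first row
  have hsub : Φ.submatrix Fin.succ (Fin.last n).succAbove = 1 := by
    ext a b
    have hbn : (b : ℕ) ≠ n := b.isLt.ne
    simp only [Matrix.submatrix_apply, Fin.succAbove_last, Φ, Matrix.of_apply,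
      Nat.add_sub_cancel, Fin.coe_castSucc, Fin.val_succ, Matrix.one_apply,
      Fin.ext_iff, if_neg hbn]
    by_cases hab : (a : ℕ) = (b : ℕ) <;> simp [hab]
  have hexp : Φ.det = (-1) ^ n * f ⟨0, hN⟩ := by
    rw [Matrix.det_succ_row_zero, Finset.sum_eq_single (Fin.last n)]
    · rw [hsub, Matrix.det_one, mul_one, Fin.val_last]
      have h0 : Φ 0 (Fin.last n) = f ⟨0, hN⟩ := by
        have : (⟨0, hN⟩ : Fin (n + 1)) = 0 := rfl
        simp [Φ, this]
      rw [h0]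
    · intro j _ hj
      have hjn : (j : ℕ) ≠ n := fun h => hj (Fin.ext (by simp [h]))
      have h0 : Φ 0 j = 0 := by
        simp [Φ, hjn]
      simp [h0]
    · simp
  have key : (-1 : Esep) ^ n * f ⟨0, hN⟩ = M.det ^ (q - 1) := hexp.symm.trans hdetΦ
  have hneg : ((-1 : Esep)) ^ n * (-1 : Esep) ^ n = 1 := by
    rw [← pow_add, ← two_mul, pow_mul]
    norm_num
  have hf0 : f ⟨0, hN⟩ = (-1) ^ (n + 1 - 1) * M.det ^ (q - 1) := by
    rw [Nat.add_sub_cancel]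
    calc f ⟨0, hN⟩ = ((-1 : Esep) ^ n * (-1 : Esep) ^ n) * f ⟨0, hN⟩ := by
          rw [hneg, one_mul]
      _ = (-1) ^ n * ((-1) ^ n * f ⟨0, hN⟩) := by ring
      _ = (-1) ^ n * M.det ^ (q - 1) := by rw [key]
  refine ⟨?_, ?_, hf0, ?_⟩
  · rw [hM1, ← Matrix.mul_assoc, Matrix.nonsing_inv_mul M hMunit, Matrix.one_mul]
  · rw [Matrix.isUnit_iff_isUnit_det, hdetΦ]
    exact (pow_ne_zero _ hdet).isUnit
  · rw [hf0]
    exact mul_ne_zero (pow_ne_zero _ (by norm_num)) (pow_ne_zero _ hdet)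
end

section
/- Suppose d = 1 (i.e., ρ : G → GL_n(F_q)) and ρ is irreducible as an F_q-representation of the finite group G through which it factors. Then every nonzero element u of Sol_E(ρ) = {x ∈ Mat_{n×1}(L) : g(x) = ρ(g)^{-1} x for all g ∈ G} is a fundamental solution, i.e., its n entries are linearly independent over F_q. -/
open Matrix

/-- For `d = 1` and `ρ : Gal(L/E) → GL_n(F_q)` irreducible, every nonzero element
`u` of `Sol_E(ρ) = {x ∈ L^n : g(x) = ρ(g)⁻¹ x for all g}` has `F_q`-linearly
independent entries, i.e. is a fundamental solution. -/
theorem stmt_9 (Fq E L : Type*) [Field Fq] [Fintype Fq] [Field E] [Field L]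
    [Algebra Fq E] [Algebra E L] [Algebra Fq L] [IsScalarTower Fq E L]
    [FiniteDimensional E L] [IsGalois E L]
    (n : ℕ) (ρ : (L ≃ₐ[E] L) →* Matrix.GeneralLinearGroup (Fin n) Fq)
    (hirr : ∀ W : Submodule Fq (Fin n → Fq),
      (∀ (g : L ≃ₐ[E] L), ∀ w ∈ W, (ρ g : Matrix (Fin n) (Fin n) Fq) *ᵥ w ∈ W) →
      W = ⊥ ∨ W = ⊤)
    (u : Fin n → L) (hu : u ≠ 0)
    (hsol : ∀ g : L ≃ₐ[E] L,
      (fun i => g (u i)) =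
        (((ρ g)⁻¹ : Matrix (Fin n) (Fin n) Fq).map (algebraMap Fq L)) *ᵥ u) :
    LinearIndependent Fq u := by
  classical
  -- the Fq-linear map `c ↦ ∑ c i • u i`
  let φ : (Fin n → Fq) →ₗ[Fq] L :=
    { toFun := fun c => ∑ i, c i • u i
      map_add' := fun x y => by
        simp [add_smul, Finset.sum_add_distrib]
      map_smul' := fun a x => by
        simp [smul_smul, Finset.smul_sum] }
  set H : Submodule Fq (Fin n → Fq) := LinearMap.ker φ with hH
  -- the dot-product bilinear form
  let B : LinearMap.BilinForm Fq (Fin n → Fq) :=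
    LinearMap.mk₂ Fq (fun v w => dotProduct v w)
      (fun v v' w => add_dotProduct v v' w)
      (fun a v w => smul_dotProduct a v w)
      (fun v w w' => dotProduct_add v w w')
      (fun a v w => dotProduct_smul a v w)
  have hBapp : ∀ v w : Fin n → Fq, B v w = dotProduct v w := fun _ _ => rfl
  have hBrefl : B.IsRefl := by
    intro v w h
    rw [hBapp] at h ⊢
    rwa [dotProduct_comm]
  have hBnd : B.Nondegenerate := by
    refine hBrefl.nondegenerate_iff_separatingLeft.mpr ?_
    intro v hv
    funext i
    have := hv (Pi.single i 1)
    rw [hBapp] at this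
    simpa using this
  -- every element of `algebraMap Fq L` is fixed by the Galois group
  have hfix : ∀ (g : L ≃ₐ[E] L) (a : Fq), g (algebraMap Fq L a) = algebraMap Fq L a := by
    intro g a
    rw [IsScalarTower.algebraMap_apply Fq E L, g.commutes]
  -- `g⁻¹ u = ρ(g) u`
  have hAu : ∀ (g : L ≃ₐ[E] L) (i : Fin n),
      g⁻¹ (u i) = ∑ j, algebraMap Fq L ((ρ g : Matrix (Fin n) (Fin n) Fq) i j) * u j := by
    intro g i
    have h1 : ((ρ g⁻¹)⁻¹ : Matrix.GeneralLinearGroup (Fin n) Fq) = ρ g := by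
      rw [map_inv, inv_inv]
    have h2 := congrFun (hsol g⁻¹) i
    rw [← Matrix.coe_units_inv, h1] at h2
    simpa [Matrix.mulVec, dotProduct, Matrix.map_apply] using h2
  -- `H` is invariant under the transposes `ρ(g)ᵀ`
  have hHinv : ∀ (g : L ≃ₐ[E] L), ∀ c ∈ H,
      (ρ g : Matrix (Fin n) (Fin n) Fq)ᵀ *ᵥ c ∈ H := by
    intro g c hc
    have hc' : ∑ i, c i • u i = 0 := hc
    have h0 : ∑ i, c i • ((g⁻¹ : L ≃ₐ[E] L) (u i)) = 0 := by
      have h := congrArg (g⁻¹ : L ≃ₐ[E] L) hc'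
      simpa [map_sum, Algebra.smul_def, _root_.map_mul, hfix] using h
    have expand : ∑ j, ((ρ g : Matrix (Fin n) (Fin n) Fq)ᵀ *ᵥ c) j • u j
        = ∑ i, c i • ((g⁻¹ : L ≃ₐ[E] L) (u i)) := by
      simp only [hAu, Matrix.mulVec, dotProduct, Matrix.transpose_apply,
        Algebra.smul_def, map_sum, _root_.map_mul, Finset.sum_mul, Finset.mul_sum]
      rw [Finset.sum_comm]
      refine Finset.sum_congr rfl fun i _ => Finset.sum_congr rfl fun j _ => ?_
      ring
    show ∑ j, ((ρ g : Matrix (Fin n) (Fin n) Fq)ᵀ *ᵥ c) j • u j = 0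
    rw [expand, h0]
  -- the orthogonal complement of `H` is invariant under `ρ`
  have hWinv : ∀ (g : L ≃ₐ[E] L), ∀ w ∈ B.orthogonal H,
      (ρ g : Matrix (Fin n) (Fin n) Fq) *ᵥ w ∈ B.orthogonal H := by
    intro g w hw c hc
    have key : dotProduct c ((ρ g : Matrix (Fin n) (Fin n) Fq) *ᵥ w)
        = dotProduct ((ρ g : Matrix (Fin n) (Fin n) Fq)ᵀ *ᵥ c) w := by
      rw [Matrix.dotProduct_mulVec, Matrix.mulVec_transpose]
    have := hw _ (hHinv g c hc)
    show B c ((ρ g : Matrix (Fin n) (Fin n) Fq) *ᵥ w) = 0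
    rw [hBapp, key, ← hBapp]
    exact this
  rcases hirr (B.orthogonal H) hWinv with h | h
  · -- orthogonal complement is ⊥, so `H = ⊤` and `u = 0`: contradiction
    exfalso
    have hHtop : H = ⊤ := by
      have := LinearMap.BilinForm.orthogonal_orthogonal hBnd hBrefl H
      rw [h, LinearMap.BilinForm.orthogonal_bot] at this
      exact this.symm
    apply hu
    funext i
    have hmem : (Pi.single i 1 : Fin n → Fq) ∈ H := hHtop ▸ Submodule.mem_top
    have : ∑ j, (Pi.single i 1 : Fin n → Fq) j • u j = 0 := hmem
    simpa [Pi.single_apply, ite_smul] using this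
  · -- orthogonal complement is ⊤, so `H = ⊥`: linear independence
    have hHbot : H = ⊥ := by
      have := LinearMap.BilinForm.orthogonal_orthogonal hBnd hBrefl H
      rw [h, LinearMap.BilinForm.orthogonal_top_eq_bot hBnd] at this
      exact this.symm
    rw [Fintype.linearIndependent_iff]
    intro c hc i
    have : c ∈ H := hc
    rw [hHbot] at this
    simpa using congrFun (Submodule.mem_bot _ |>.mp this) i
end

section
/- Let A = F_q[θ], K_∞ = F_q((1/θ)), n | q-1, f ∈ A n-th power free of degree d, and E_t = θ + f^{(q-1)/n}τ. The logarithm series log_E = Σ_{k≥0} ℓ_k τ^k has coefficients ℓ_k = (-1)^k f^{(q^k-1)/n} / L_k, where L_0 = 1 and L_k = (θ^{q^k}-θ)(θ^{q^{k-1}}-θ)···(θ^q-θ). Its radius of convergence in K_∞ (with |θ|_∞ = q) is q^{1 + 1/(q-1) - d/n}. -/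
open Filter RatFunc

private lemma aux_nat_div (n q k : ℕ) (hn0 : 0 < n) (hq : 1 ≤ q) (hn : n ∣ q - 1) :
    (q ^ (k + 1) - 1) / n = (q ^ k - 1) / n + (q - 1) / n * q ^ k := by
  obtain ⟨b, hb⟩ := dvd_trans hn (Nat.sub_dvd_pow_sub_pow q 1 k)
  rw [one_pow] at hb
  obtain ⟨a, ha⟩ := hn
  have hq1 : q = n * a + 1 := by omega
  have hqk1 : q ^ k = n * b + 1 := by
    have := Nat.one_le_pow k q (by omega); omega
  have key : q ^ (k + 1) = n * (a * (n * b + 1) + b) + 1 := by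
    rw [pow_succ, hqk1, hq1]; ring
  have h1 : (q ^ (k + 1) - 1) / n = a * (n * b + 1) + b := by
    rw [key, Nat.add_sub_cancel, Nat.mul_div_cancel_left _ hn0]
  have h2 : (q ^ k - 1) / n = b := by rw [hb, Nat.mul_div_cancel_left _ hn0]
  have h3 : (q - 1) / n = a := by rw [ha, Nat.mul_div_cancel_left _ hn0]
  rw [h1, h2, h3, hqk1]; ring

private lemma intDegree_inv' {K : Type*} [Field K] {x : RatFunc K} (hx : x ≠ 0) :
    (x⁻¹).intDegree = -x.intDegree := by
  have h := RatFunc.intDegree_mul hx (inv_ne_zero hx)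
  rw [mul_inv_cancel₀ hx, RatFunc.intDegree_one] at h
  omega

private lemma intDegree_div' {K : Type*} [Field K] {x y : RatFunc K} (hx : x ≠ 0) (hy : y ≠ 0) :
    (x / y).intDegree = x.intDegree - y.intDegree := by
  rw [div_eq_mul_inv, RatFunc.intDegree_mul hx (inv_ne_zero hy), intDegree_inv' hy, sub_eq_add_neg]

private lemma intDegree_pow' {K : Type*} [Field K] {x : RatFunc K} (hx : x ≠ 0) (m : ℕ) :
    (x ^ m).intDegree = m * x.intDegree := by
  induction m with
  | zero => simp [RatFunc.intDegree_one]
  | succ m ih =>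
    rw [pow_succ, RatFunc.intDegree_mul (pow_ne_zero m hx) hx, ih]
    push_cast; ring

/-- For `E_t = θ + f^{(q-1)/n} τ` with `n ∣ q-1` and `f` of degree `d`, the logarithm
coefficients (determined by `ℓ_0 = 1` and the recursion coming from
`log_E ∘ E_t = θ ∘ log_E`) are `ℓ_k = (-1)^k f^{(q^k-1)/n} / L_k` with
`L_k = ∏_{j=1}^k (θ^{q^j} - θ)`, and the radius of convergence
`(lim_k |ℓ_k|_∞^{1/q^k})⁻¹` equals `q^{1 + 1/(q-1) - d/n}` (with `|x|_∞ = q^{deg x}`). -/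
theorem stmt_15 (Fq : Type*) [Field Fq] [Fintype Fq]
    (n : ℕ) (hn : n ∣ Fintype.card Fq - 1) (hn0 : 0 < n)
    (f : Polynomial Fq) (hf0 : f ≠ 0)
    (hfree : ∀ g : Polynomial Fq, 0 < g.natDegree → ¬ g ^ n ∣ f)
    (d : ℕ) (hd : f.natDegree = d)
    (ℓ : ℕ → RatFunc Fq) (hℓ0 : ℓ 0 = 1)
    (hrec : ∀ k : ℕ,
      ℓ (k + 1) * (RatFunc.X ^ Fintype.card Fq ^ (k + 1) - RatFunc.X) =
        - ℓ k * algebraMap (Polynomial Fq) (RatFunc Fq) f ^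
            ((Fintype.card Fq - 1) / n * Fintype.card Fq ^ k)) :
    (∀ k : ℕ, ℓ k = (-1) ^ k *
        algebraMap (Polynomial Fq) (RatFunc Fq) f ^ ((Fintype.card Fq ^ k - 1) / n) /
        ∏ j ∈ Finset.Icc 1 k, (RatFunc.X ^ Fintype.card Fq ^ j - RatFunc.X)) ∧
    Filter.Tendsto
      (fun k : ℕ => ((Fintype.card Fq : ℝ) ^ (((ℓ k).intDegree : ℝ))) ^
        ((1 : ℝ) / (Fintype.card Fq : ℝ) ^ k))
      Filter.atTop
      (nhds (((Fintype.card Fq : ℝ) ^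
        ((1 : ℝ) + 1 / ((Fintype.card Fq : ℝ) - 1) - (d : ℝ) / (n : ℝ)))⁻¹)) := by
  set q := Fintype.card Fq with hqdef
  have hq2 : 2 ≤ q := Fintype.one_lt_card
  set F := algebraMap (Polynomial Fq) (RatFunc Fq) f with hFdef
  have hF : F ≠ 0 := RatFunc.algebraMap_ne_zero hf0
  -- nonzeroness and degree of the factors
  have hG : ∀ j : ℕ, 1 ≤ j → (RatFunc.X ^ q ^ j - RatFunc.X : RatFunc Fq) ≠ 0 := by
    intro j hj h
    have hm : 2 ≤ q ^ j := le_trans hq2 (Nat.le_self_pow (by omega) q)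
    have hx : (RatFunc.X : RatFunc Fq) ^ q ^ j = RatFunc.X := sub_eq_zero.mp h
    have := congrArg RatFunc.intDegree hx
    rw [intDegree_pow' RatFunc.X_ne_zero, RatFunc.intDegree_X, mul_one] at this
    omega
  have hGdeg : ∀ j : ℕ, 1 ≤ j →
      (RatFunc.X ^ q ^ j - RatFunc.X : RatFunc Fq).intDegree = q ^ j := by
    intro j hj
    have hm : 2 ≤ q ^ j := le_trans hq2 (Nat.le_self_pow (by omega) q)
    have heq : (RatFunc.X ^ q ^ j - RatFunc.X : RatFunc Fq) =
        algebraMap (Polynomial Fq) (RatFunc Fq) (Polynomial.X ^ q ^ j - Polynomial.X) := by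
      simp [map_sub, map_pow]
    rw [heq, RatFunc.intDegree_polynomial,
      Polynomial.natDegree_sub_eq_left_of_natDegree_lt, Polynomial.natDegree_X_pow]
    · push_cast; ring
    · rw [Polynomial.natDegree_X, Polynomial.natDegree_X_pow]; omega
  have hP : ∀ k : ℕ,
      (∏ j ∈ Finset.Icc 1 k, (RatFunc.X ^ q ^ j - RatFunc.X) : RatFunc Fq) ≠ 0 := by
    intro k
    exact Finset.prod_ne_zero_iff.mpr fun j hj => hG j (Finset.mem_Icc.mp hj).1
  -- Part 1: the closed formula
  have hform : ∀ k : ℕ, ℓ k = (-1) ^ k * F ^ ((q ^ k - 1) / n) /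
      ∏ j ∈ Finset.Icc 1 k, (RatFunc.X ^ q ^ j - RatFunc.X) := by
    intro k
    induction k with
    | zero => simp [hℓ0]
    | succ k ih =>
      have h := hrec k
      have hGk := hG (k + 1) (by omega)
      have hPk := hP k
      have hstep : ℓ (k + 1) =
          (-ℓ k * F ^ ((q - 1) / n * q ^ k)) / (RatFunc.X ^ q ^ (k + 1) - RatFunc.X) :=
        (eq_div_iff hGk).mpr h
      rw [hstep, ih, Finset.prod_Icc_succ_top (Nat.le_add_left 1 k),
        aux_nat_div n q k hn0 (by omega) hn, pow_add, pow_succ]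
      field_simp
      ring
  refine ⟨hform, ?_⟩
  -- Part 2: the limit
  have hdeg : ∀ k : ℕ, (ℓ k).intDegree =
      (d : ℤ) * ((q ^ k - 1) / n : ℕ) - ∑ j ∈ Finset.Icc 1 k, (q ^ j : ℤ) := by
    intro k
    have hnum : ((-1 : RatFunc Fq) ^ k * F ^ ((q ^ k - 1) / n)) ≠ 0 :=
      mul_ne_zero (pow_ne_zero _ (neg_ne_zero.mpr one_ne_zero)) (pow_ne_zero _ hF)
    rw [hform k, intDegree_div' hnum (hP k),
      RatFunc.intDegree_mul (pow_ne_zero _ (neg_ne_zero.mpr one_ne_zero)) (pow_ne_zero _ hF),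
      intDegree_pow' hF]
    have h1 : ((-1 : RatFunc Fq) ^ k).intDegree = 0 := by
      rcases neg_one_pow_eq_or (RatFunc Fq) k with h | h <;>
        simp [h, RatFunc.intDegree_one, RatFunc.intDegree_neg]
    have h2 : F.intDegree = (d : ℤ) := by
      rw [hFdef, RatFunc.intDegree_polynomial, hd]
    have h3 : ∀ m : ℕ, (∏ j ∈ Finset.Icc 1 m, (RatFunc.X ^ q ^ j - RatFunc.X) :
        RatFunc Fq).intDegree = ∑ j ∈ Finset.Icc 1 m, (q ^ j : ℤ) := by
      intro m
      induction m with
      | zero => simp [RatFunc.intDegree_one]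
      | succ m ih =>
        rw [Finset.prod_Icc_succ_top (Nat.le_add_left 1 m),
          Finset.sum_Icc_succ_top (Nat.le_add_left 1 m),
          RatFunc.intDegree_mul (hP m) (hG (m + 1) (by omega)), ih,
          hGdeg (m + 1) (by omega)]
    rw [h1, h2, h3, zero_add, mul_comm]
  -- real analysis
  have hq0 : (0 : ℝ) < q := by positivity
  have hq1 : (1 : ℝ) < q := by exact_mod_cast hq2.trans_lt' one_lt_two
  have hq1' : (q : ℝ) - 1 ≠ 0 := by nlinarith
  have hn0' : (n : ℝ) ≠ 0 := Nat.cast_ne_zero.mpr hn0.ne'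
  set φ : ℝ → ℝ := fun t => (d : ℝ) / n * (1 - t) - ((q : ℝ) - t) / ((q : ℝ) - 1) + t with hφ
  have hφcont : Continuous φ := by
    apply Continuous.add
    · exact (continuous_const.mul (continuous_const.sub continuous_id)).sub
        ((continuous_const.sub continuous_id).div_const _)
    · exact continuous_id
  have ht : Tendsto (fun k : ℕ => ((q : ℝ)⁻¹) ^ k) atTop (nhds 0) :=
    tendsto_pow_atTop_nhds_zero_of_lt_one (by positivity) (by
      rw [inv_lt_one_iff₀]; right; exact hq1)
  have hlim : Tendsto (fun k : ℕ => ((ℓ k).intDegree : ℝ) / (q : ℝ) ^ k) atTop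
      (nhds (φ 0)) := by
    have hcomp : Tendsto (fun k : ℕ => φ (((q : ℝ)⁻¹) ^ k)) atTop (nhds (φ 0)) :=
      (hφcont.tendsto 0).comp ht
    apply hcomp.congr
    intro k
    have hqk : (0 : ℝ) < (q : ℝ) ^ k := by positivity
    have hmk : (((q ^ k - 1) / n : ℕ) : ℝ) = ((q : ℝ) ^ k - 1) / n := by
      have hdvd : n ∣ q ^ k - 1 := hn.trans (by
        simpa using Nat.sub_dvd_pow_sub_pow q 1 k)
      rw [Nat.cast_div hdvd hn0', Nat.cast_sub (Nat.one_le_pow _ _ (by omega))]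
      push_cast; ring
    have hsk : ((∑ j ∈ Finset.Icc 1 k, (q ^ j : ℤ) : ℤ) : ℝ) =
        ((q : ℝ) ^ (k + 1) - 1) / ((q : ℝ) - 1) - 1 := by
      push_cast
      have : ∑ j ∈ Finset.Icc 1 k, (q : ℝ) ^ j =
          (∑ j ∈ Finset.range (k + 1), (q : ℝ) ^ j) - 1 := by
        rw [Finset.range_eq_Ico, show Finset.Icc 1 k = Finset.Ico 1 (k + 1) by rfl,
          ← Finset.sum_Ico_consecutive _ (Nat.zero_le 1) (by omega)]
        simp
      rw [this, geom_sum_eq (by exact_mod_cast hq1.ne') (k + 1)]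
    rw [hdeg k, Int.cast_sub, Int.cast_mul, Int.cast_natCast, Int.cast_natCast, hmk, hsk, hφ]
    have hinv : ((q : ℝ)⁻¹) ^ k = ((q : ℝ) ^ k)⁻¹ := by rw [inv_pow]
    rw [hinv]
    field_simp
    ring
  have hφ0 : φ 0 = -((1 : ℝ) + 1 / ((q : ℝ) - 1) - (d : ℝ) / (n : ℝ)) := by
    rw [hφ]
    field_simp
    ring
  have hfinal : Tendsto (fun k : ℕ => (q : ℝ) ^ (((ℓ k).intDegree : ℝ) / (q : ℝ) ^ k))
      atTop (nhds ((q : ℝ) ^ (φ 0))) :=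
    Filter.Tendsto.rpow tendsto_const_nhds hlim (Or.inl hq0.ne')
  have hrw : ((q : ℝ) ^ (φ 0)) = ((q : ℝ) ^
      ((1 : ℝ) + 1 / ((q : ℝ) - 1) - (d : ℝ) / (n : ℝ)))⁻¹ := by
    rw [hφ0, Real.rpow_neg hq0.le]
  rw [← hrw]
  apply hfinal.congr
  intro k
  rw [← Real.rpow_natCast (q : ℝ) k, ← Real.rpow_mul hq0.le, mul_one_div,
    Real.rpow_natCast]
end

section
/- Let A = F_q[θ], n | q-1, f ∈ A n-th power free with deg f ≤ n, and E_t = θ + f^{(q-1)/n}τ. Then log_E converges on the ring of integers O_∞ = {a ∈ K_∞ : |a|_∞ ≤ 1}, and for all a ∈ O_∞ we have exp_E(log_E(a)) = a; consequently O_∞ ⊆ exp_E(K_∞) and A + exp_E(K_∞) = K_∞. -/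
/-- For `E_t = θ + f^{(q-1)/n} τ` with `deg f ≤ n ∣ q-1`, the logarithm series
`log_E(a) = Σ ℓ_k a^{q^k}` converges for every `a` in the ring of integers
`O_∞ = {a : ‖a‖ ≤ 1}` of the complete nonarchimedean field `K_∞` (the completion of
`K = F_q(θ)` at `∞`, pinned down by `‖ι x‖ = q^{deg_∞ x}`), and
`exp_E(log_E(a)) = a`; consequently `O_∞ ⊆ exp_E(K_∞)`, and if `A + O_∞ = K_∞`
then `A + exp_E(K_∞) = K_∞`. -/
theorem stmt_16 (Fq : Type*) [Field Fq] [Fintype Fq]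
    (n : ℕ) (hn : n ∣ Fintype.card Fq - 1) (hn0 : 0 < n)
    (f : Polynomial Fq) (hf0 : f ≠ 0) (hdeg : f.natDegree ≤ n)
    (Kinf : Type*) [NormedField Kinf] [CompleteSpace Kinf]
    (hna : IsNonarchimedean (fun x : Kinf => ‖x‖))
    (ι : RatFunc Fq →+* Kinf)
    (hv : ∀ x : RatFunc Fq, x ≠ 0 → ‖ι x‖ = (Fintype.card Fq : ℝ) ^ (x.intDegree : ℝ)) :
    let q := Fintype.card Fq
    let ℓ : ℕ → RatFunc Fq := fun k =>
      (-1) ^ k * algebraMap (Polynomial Fq) (RatFunc Fq) f ^ ((q ^ k - 1) / n) /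
        ∏ j ∈ Finset.Icc 1 k, (RatFunc.X ^ q ^ j - RatFunc.X)
    let e : ℕ → RatFunc Fq := fun k =>
      algebraMap (Polynomial Fq) (RatFunc Fq) f ^ ((q ^ k - 1) / n) /
        ∏ j ∈ Finset.Icc 1 k, (RatFunc.X ^ q ^ j - RatFunc.X) ^ q ^ (k - j)
    (∀ a : Kinf, ‖a‖ ≤ 1 → ∃ l : Kinf,
      HasSum (fun k => ι (ℓ k) * a ^ q ^ k) l ∧
      HasSum (fun k => ι (e k) * l ^ q ^ k) a) ∧
    ((∀ x : Kinf, ∃ p : Polynomial Fq,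
        ‖x - ι (algebraMap (Polynomial Fq) (RatFunc Fq) p)‖ ≤ 1) →
      ∀ x : Kinf, ∃ (p : Polynomial Fq) (u : Kinf),
        HasSum (fun k => ι (e k) * u ^ q ^ k)
          (x - ι (algebraMap (Polynomial Fq) (RatFunc Fq) p))) := by
  intro q ℓ e
  classical
  -- basic numerics
  have hq2 : 2 ≤ q := Fintype.one_lt_card
  have hq0 : 0 < q := by omega
  have hqk1 : ∀ k : ℕ, 1 ≤ q ^ k := fun k => Nat.one_le_pow _ _ hq0
  have hqj2 : ∀ j : ℕ, 1 ≤ j → 2 ≤ q ^ j := by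
    intro j hj
    calc 2 ≤ q := hq2
    _ = q ^ 1 := (pow_one q).symm
    _ ≤ q ^ j := Nat.pow_le_pow_right (by omega) hj
  -- characteristic
  set p := ringChar Fq with hpdef
  haveI : CharP Fq p := ringChar.charP Fq
  have hpprime : p.Prime := CharP.char_is_prime Fq p
  haveI : Fact p.Prime := ⟨hpprime⟩
  obtain ⟨m0, -, hqpe⟩ := FiniteField.card Fq p
  haveI hK : CharP (RatFunc Fq) p :=
    charP_of_injective_algebraMap (algebraMap Fq (RatFunc Fq)).injective p
  haveI : CharP Kinf p := charP_of_injective_ringHom ι.injective p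
  haveI : ExpChar (RatFunc Fq) p := ExpChar.prime hpprime
  haveI : ExpChar Kinf p := ExpChar.prime hpprime
  have hq' : q = p ^ (m0 : ℕ) := hqpe
  have hqpow : ∀ k : ℕ, q ^ k = p ^ ((m0 : ℕ) * k) := by
    intro k; rw [hq', pow_mul]
  -- Frobenius facts
  have frobsub : ∀ (x y : RatFunc Fq) (k : ℕ), (x - y) ^ q ^ k = x ^ q ^ k - y ^ q ^ k := by
    intro x y k; rw [hqpow]; exact sub_pow_char_pow x y _
  have frobsumq : ∀ (s : Finset ℕ) (h : ℕ → RatFunc Fq),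
      (∑ i ∈ s, h i) ^ q = ∑ i ∈ s, h i ^ q := by
    intro s h
    have := hqpow 1
    rw [pow_one] at this
    rw [this]
    exact sum_pow_char_pow p _ s h
  have frobHasSum : ∀ (h : ℕ → Kinf) (s : Kinf) (k : ℕ), HasSum h s →
      HasSum (fun i => h i ^ q ^ k) (s ^ q ^ k) := by
    intro h s k hs
    have hcoe : ⇑(iterateFrobenius Kinf p ((m0 : ℕ) * k)) = fun x : Kinf => x ^ q ^ k := by
      funext x; rw [iterateFrobenius_def, ← hqpow]
    have h2 := hs.map (iterateFrobenius Kinf p ((m0 : ℕ) * k))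
      (by rw [hcoe]; exact continuous_pow _)
    rw [show (iterateFrobenius Kinf p ((m0 : ℕ) * k)) s = s ^ q ^ k from by
      rw [iterateFrobenius_def, ← hqpow]] at h2
    rw [hcoe] at h2
    exact h2
  -- algebraic abbreviations
  set F : RatFunc Fq := algebraMap (Polynomial Fq) (RatFunc Fq) f with hFdef
  set a : ℕ → ℕ := fun k => (q ^ k - 1) / n with hadef
  set b : ℕ := (q - 1) / n with hbdef
  set g : RatFunc Fq := F ^ b with hgdef
  set c : ℕ → RatFunc Fq := fun j => RatFunc.X ^ q ^ j - RatFunc.X with hcdef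
  set Lr : ℕ → RatFunc Fq := fun k => ∏ j ∈ Finset.Icc 1 k, c j with hLrdef
  set Dr : ℕ → RatFunc Fq := fun k => ∏ j ∈ Finset.Icc 1 k, c j ^ q ^ (k - j) with hDrdef
  have hl : ∀ k, ℓ k = (-1) ^ k * F ^ a k / Lr k := fun k => rfl
  have he : ∀ k, e k = F ^ a k / Dr k := fun k => rfl
  -- polynomial versions, nonvanishing
  set cp : ℕ → Polynomial Fq := fun j => Polynomial.X ^ q ^ j - Polynomial.X with hcpdef
  have hcalg : ∀ j, c j = algebraMap (Polynomial Fq) (RatFunc Fq) (cp j) := by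
    intro j; rw [hcdef, hcpdef]; simp [map_sub, map_pow, RatFunc.algebraMap_X]
  have hcpdeg : ∀ j, 1 ≤ j → (cp j).natDegree = q ^ j := by
    intro j hj
    rw [hcpdef]
    rw [Polynomial.natDegree_sub_eq_left_of_natDegree_lt, Polynomial.natDegree_X_pow]
    rw [Polynomial.natDegree_X_pow, Polynomial.natDegree_X]
    have := hqj2 j hj; omega
  have hcp0 : ∀ j, 1 ≤ j → cp j ≠ 0 := by
    intro j hj h0
    have := hcpdeg j hj
    rw [h0, Polynomial.natDegree_zero] at this
    have := hqj2 j hj; omega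
  have hc0 : ∀ j, 1 ≤ j → c j ≠ 0 := by
    intro j hj
    rw [hcalg]
    exact RatFunc.algebraMap_ne_zero (hcp0 j hj)
  have hF0 : F ≠ 0 := RatFunc.algebraMap_ne_zero hf0
  have hLr0 : ∀ k, Lr k ≠ 0 := by
    intro k
    rw [hLrdef]
    exact Finset.prod_ne_zero_iff.mpr fun j hj => hc0 j (Finset.mem_Icc.mp hj).1
  have hDr0 : ∀ k, Dr k ≠ 0 := by
    intro k
    rw [hDrdef]
    exact Finset.prod_ne_zero_iff.mpr fun j hj => pow_ne_zero _ (hc0 j (Finset.mem_Icc.mp hj).1)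
  have hl0 : ∀ k, ℓ k ≠ 0 := by
    intro k
    rw [hl]
    exact div_ne_zero (mul_ne_zero (pow_ne_zero _ (by norm_num)) (pow_ne_zero _ hF0)) (hLr0 k)
  -- divisibility and exponent arithmetic
  have hdvd : ∀ k : ℕ, n ∣ q ^ k - 1 := by
    intro k
    exact hn.trans (by simpa using Nat.sub_dvd_pow_sub_pow q 1 k)
  have han : ∀ k, a k * n = q ^ k - 1 := fun k => Nat.div_mul_cancel (hdvd k)
  have ha0 : a 0 = 0 := by rw [hadef]; simp
  have hmulb : ∀ k : ℕ, ((q - 1) * q ^ k) / n = b * q ^ k := by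
    intro k
    rw [mul_comm (q - 1) (q ^ k), Nat.mul_div_assoc _ hn, hbdef, mul_comm]
  have ha_rec1 : ∀ k, a (k + 1) = a k + b * q ^ k := by
    intro k
    have h2 : (q - 1) * q ^ k = q ^ (k + 1) - q ^ k := by
      rw [Nat.sub_mul, one_mul, pow_succ, mul_comm]
    have h3 : q ^ (k + 1) - 1 = (q ^ k - 1) + (q - 1) * q ^ k := by
      rw [h2]
      have h4 := hqk1 k
      have h5 : q ^ k ≤ q ^ (k + 1) := Nat.pow_le_pow_right (by omega) (by omega)
      omega
    rw [hadef]
    simp only []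
    rw [h3, Nat.add_div_of_dvd_right (hdvd k), hmulb k]
  have ha_rec2 : ∀ k, a (k + 1) = b + a k * q := by
    intro k
    have h2 : (q ^ k - 1) * q = q ^ (k + 1) - q := by
      rw [Nat.sub_mul, one_mul, pow_succ]
    have h3 : q ^ (k + 1) - 1 = (q - 1) + (q ^ k - 1) * q := by
      rw [h2]
      have h4 := hqk1 k
      have h5 : q ≤ q ^ (k + 1) := by
        calc q = q ^ 1 := (pow_one q).symm
        _ ≤ q ^ (k+1) := Nat.pow_le_pow_right (by omega) (by omega)
      omega
    rw [hadef]
    simp only []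
    rw [h3, Nat.add_div_of_dvd_right hn]
    congr 1
    rw [mul_comm (q ^ k - 1) q, Nat.mul_div_assoc _ (hdvd k), mul_comm]
  have hFa1 : ∀ k, F ^ a (k + 1) = F ^ a k * g ^ q ^ k := by
    intro k; rw [ha_rec1 k, pow_add, hgdef, ← pow_mul]
  have hFa2 : ∀ k, F ^ a (k + 1) = g * (F ^ a k) ^ q := by
    intro k; rw [ha_rec2 k, pow_add, hgdef, ← pow_mul]
  -- product recursions
  have hLr_succ : ∀ k, Lr (k + 1) = Lr k * c (k + 1) := by
    intro k; rw [hLrdef]; exact Finset.prod_Icc_succ_top (by omega) _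
  have hDr_succ : ∀ k, Dr (k + 1) = c (k + 1) * Dr k ^ q := by
    intro k
    rw [hDrdef]
    simp only []
    rw [Finset.prod_Icc_succ_top (by omega : 1 ≤ k + 1)]
    rw [Nat.sub_self, pow_zero, pow_one, mul_comm]
    congr 1
    rw [← Finset.prod_pow]
    apply Finset.prod_congr rfl
    intro j hj
    obtain ⟨hj1, hj2⟩ := Finset.mem_Icc.mp hj
    rw [← pow_mul]
    congr 1
    rw [← pow_succ]
    congr 1
    omega
  -- recursions of ℓ and e
  have hlrec : ∀ k, ℓ (k + 1) * (RatFunc.X - RatFunc.X ^ q ^ (k + 1)) = ℓ k * g ^ q ^ k := by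
    intro k
    rw [hl, hl, hLr_succ]
    have hc := hc0 (k + 1) (by omega)
    have hL := hLr0 k
    rw [hcdef] at hc ⊢
    field_simp
    rw [hFa1 k]
    ring
  have herec : ∀ k, e (k + 1) * (RatFunc.X ^ q ^ (k + 1) - RatFunc.X) = g * (e k) ^ q := by
    intro k
    rw [he, he, hDr_succ]
    have hc := hc0 (k + 1) (by omega)
    have hD := hDr0 k
    rw [hcdef] at hc ⊢
    field_simp
    rw [hFa2 k]
    ring
    rw [mul_assoc, ← mul_pow, mul_inv_cancel₀ hD, one_pow, mul_one]
  -- the composition coefficients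
  set S : ℕ → RatFunc Fq := fun N => ∑ k ∈ Finset.range (N + 1), e k * (ℓ (N - k)) ^ q ^ k
    with hSdef
  have he0 : e 0 = 1 := by
    rw [he, ha0, pow_zero, hDrdef]
    simp
  have hl00 : ℓ 0 = 1 := by
    rw [hl, ha0, pow_zero, hLrdef]
    simp
  have hS0 : S 0 = 1 := by
    rw [hSdef]
    simp [he0, hl00]
  have hstep : ∀ N, S (N + 1) * (RatFunc.X ^ q ^ (N + 1) - RatFunc.X)
      = g * (S N) ^ q - g ^ q ^ N * S N := by
    intro N
    rw [hSdef]
    simp only []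
    rw [Finset.sum_mul]
    have key : ∀ k ∈ Finset.range (N + 2),
        e k * ℓ (N + 1 - k) ^ q ^ k * (RatFunc.X ^ q ^ (N + 1) - RatFunc.X)
        = (e k * ℓ (N + 1 - k) ^ q ^ k * (RatFunc.X ^ q ^ (N + 1) - RatFunc.X ^ q ^ k))
          + (e k * ℓ (N + 1 - k) ^ q ^ k * (RatFunc.X ^ q ^ k - RatFunc.X)) := by
      intro k _; ring
    rw [Finset.sum_congr rfl key, Finset.sum_add_distrib]
    have hA : (∑ k ∈ Finset.range (N + 2),
        e k * ℓ (N + 1 - k) ^ q ^ k * (RatFunc.X ^ q ^ (N + 1) - RatFunc.X ^ q ^ k))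
        = -(g ^ q ^ N * S N) := by
      rw [Finset.sum_range_succ]
      have hlast : e (N+1) * ℓ (N + 1 - (N+1)) ^ q ^ (N+1)
          * (RatFunc.X ^ q ^ (N + 1) - RatFunc.X ^ q ^ (N+1)) = 0 := by
        rw [sub_self, mul_zero]
      rw [hlast, add_zero]
      have hterm : ∀ k ∈ Finset.range (N + 1),
          e k * ℓ (N + 1 - k) ^ q ^ k * (RatFunc.X ^ q ^ (N + 1) - RatFunc.X ^ q ^ k)
          = -(g ^ q ^ N * (e k * ℓ (N - k) ^ q ^ k)) := by
        intro k hk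
        have hkN : k ≤ N := by simpa [Nat.lt_succ_iff] using Finset.mem_range.mp hk
        have h1 := congrArg (fun z => z ^ q ^ k) (hlrec (N - k))
        simp only [mul_pow] at h1
        rw [frobsub] at h1
        rw [← pow_mul, ← pow_mul, ← pow_mul, ← pow_add, ← pow_add] at h1
        have e1 : (N - k + 1) + k = N + 1 := by omega
        have e2 : (N - k) + k = N := by omega
        rw [e1, e2] at h1
        have e3 : N + 1 - k = N - k + 1 := by omega
        rw [e3]
        linear_combination (-(e k)) * h1
      rw [Finset.sum_congr rfl hterm, Finset.sum_neg_distrib, ← Finset.mul_sum]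
    have hB : (∑ k ∈ Finset.range (N + 2),
        e k * ℓ (N + 1 - k) ^ q ^ k * (RatFunc.X ^ q ^ k - RatFunc.X))
        = g * (S N) ^ q := by
      rw [Finset.sum_range_succ']
      have hfirst : e 0 * ℓ (N + 1 - 0) ^ q ^ 0 * (RatFunc.X ^ q ^ 0 - RatFunc.X) = 0 := by
        simp
      rw [hfirst, add_zero]
      have hterm : ∀ k ∈ Finset.range (N + 1),
          e (k+1) * ℓ (N + 1 - (k+1)) ^ q ^ (k+1) * (RatFunc.X ^ q ^ (k+1) - RatFunc.X)
          = g * (e k * ℓ (N - k) ^ q ^ k) ^ q := by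
        intro k hk
        have e4 : N + 1 - (k + 1) = N - k := by omega
        rw [e4]
        have h1 : (e k * ℓ (N - k) ^ q ^ k) ^ q = e k ^ q * ℓ (N - k) ^ q ^ (k+1) := by
          rw [mul_pow, ← pow_mul, ← pow_succ]
        rw [h1]
        linear_combination ℓ (N - k) ^ q ^ (k+1) * herec k
      rw [Finset.sum_congr rfl hterm, ← Finset.mul_sum, ← frobsumq]
    rw [hA, hB]
    ring
  have hSzero : ∀ N, S (N + 1) = 0 := by
    intro N
    induction N with
    | zero =>
      have h := hstep 0
      rw [hS0] at h
      have h' : S (0 + 1) * (RatFunc.X ^ q ^ (0 + 1) - RatFunc.X) = 0 := by rw [h]; ring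
      have hc := hc0 1 le_rfl
      rw [hcdef] at hc
      exact (mul_eq_zero.mp h').resolve_right (by simpa using hc)
    | succ m ih =>
      have h := hstep (m + 1)
      rw [ih, mul_zero, zero_pow (by omega : q ≠ 0), mul_zero, sub_zero] at h
      have hc := hc0 (m + 2) (by omega)
      rw [hcdef] at hc
      exact (mul_eq_zero.mp h).resolve_right hc
  -- degree bounds
  have hsum_ge : ∀ k : ℕ, q ^ k - 1 + k ≤ ∑ j ∈ Finset.Icc 1 k, q ^ j := by
    intro k
    induction k with
    | zero => simp
    | succ m ih =>
      rw [Finset.sum_Icc_succ_top (by omega : 1 ≤ m + 1)]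
      have h1 := hqk1 m
      have h2 : q ^ m ≤ q ^ (m + 1) := Nat.pow_le_pow_right (by omega) (by omega)
      omega
  have hkq : ∀ k : ℕ, q ^ k - 1 + k ≤ k * q ^ k := by
    intro k
    cases k with
    | zero => simp
    | succ m =>
      have h1 := hqk1 (m + 1)
      have h2 : m * 1 ≤ m * q ^ (m + 1) := Nat.mul_le_mul_left m h1
      have : (m + 1) * q ^ (m + 1) = q ^ (m + 1) + m * q ^ (m + 1) := by ring
      omega
  have had : ∀ k, a k * f.natDegree ≤ q ^ k - 1 := by
    intro k
    calc a k * f.natDegree ≤ a k * n := Nat.mul_le_mul_left _ hdeg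
    _ = q ^ k - 1 := han k
  have hLrdeg : ∀ k, (Lr k).intDegree = ((∑ j ∈ Finset.Icc 1 k, q ^ j : ℕ) : ℤ) := by
    intro k
    have hpoly : Lr k = algebraMap (Polynomial Fq) (RatFunc Fq) (∏ j ∈ Finset.Icc 1 k, cp j) := by
      rw [hLrdef, map_prod]
      exact Finset.prod_congr rfl fun j _ => hcalg j
    rw [hpoly, RatFunc.intDegree_polynomial]
    congr 1
    rw [Polynomial.natDegree_prod _ _ fun j hj => hcp0 j (Finset.mem_Icc.mp hj).1]
    exact Finset.sum_congr rfl fun j hj => hcpdeg j (Finset.mem_Icc.mp hj).1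
  have hDrdeg : ∀ k, (Dr k).intDegree = ((k * q ^ k : ℕ) : ℤ) := by
    intro k
    have hpoly : Dr k = algebraMap (Polynomial Fq) (RatFunc Fq)
        (∏ j ∈ Finset.Icc 1 k, cp j ^ q ^ (k - j)) := by
      rw [hDrdef, map_prod]
      exact Finset.prod_congr rfl fun j _ => by rw [map_pow, ← hcalg]
    rw [hpoly, RatFunc.intDegree_polynomial]
    congr 1
    rw [Polynomial.natDegree_prod _ _ fun j hj =>
      pow_ne_zero _ (hcp0 j (Finset.mem_Icc.mp hj).1)]
    have : ∀ j ∈ Finset.Icc 1 k, (cp j ^ q ^ (k - j)).natDegree = q ^ k := by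
      intro j hj
      obtain ⟨hj1, hj2⟩ := Finset.mem_Icc.mp hj
      rw [Polynomial.natDegree_pow, hcpdeg j hj1, ← pow_add]
      congr 1
      omega
    rw [Finset.sum_congr rfl this, Finset.sum_const, Nat.card_Icc, smul_eq_mul]
    norm_num
  have hFadeg : ∀ k, (F ^ a k).intDegree = ((a k * f.natDegree : ℕ) : ℤ) := by
    intro k
    rw [hFdef, ← map_pow, RatFunc.intDegree_polynomial, Polynomial.natDegree_pow]
  have hldeg : ∀ k, (ℓ k).intDegree ≤ -(k : ℤ) := by
    intro k
    have h1 : ℓ k * Lr k = (-1) ^ k * F ^ a k := by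
      rw [hl, div_mul_cancel₀ _ (hLr0 k)]
    have h2 := RatFunc.intDegree_mul (hl0 k) (hLr0 k)
    rw [h1] at h2
    have h3 : ((-1 : RatFunc Fq) ^ k * F ^ a k).intDegree = ((a k * f.natDegree : ℕ) : ℤ) := by
      rcases Nat.even_or_odd k with hk | hk
      · rw [hk.neg_one_pow, one_mul, hFadeg]
      · rw [hk.neg_one_pow, neg_one_mul, RatFunc.intDegree_neg, hFadeg]
    rw [h3, hLrdeg] at h2
    have h4 := hsum_ge k
    have h5 := had k
    have h6 := hqk1 k
    omega
  have he_ne : ∀ k, e k ≠ 0 := by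
    intro k
    rw [he]
    exact div_ne_zero (pow_ne_zero _ hF0) (hDr0 k)
  have hedeg : ∀ k, (e k).intDegree ≤ -(k : ℤ) := by
    intro k
    have h1 : e k * Dr k = F ^ a k := by
      rw [he, div_mul_cancel₀ _ (hDr0 k)]
    have h2 := RatFunc.intDegree_mul (he_ne k) (hDr0 k)
    rw [h1, hFadeg, hDrdeg] at h2
    have h4 := hkq k
    have h5 := had k
    have h6 := hqk1 k
    omega
  -- norm bound
  have hq2R : (2 : ℝ) ≤ (q : ℝ) := by exact_mod_cast hq2
  have hnormB : ∀ (x : RatFunc Fq) (k : ℕ), x.intDegree ≤ -(k : ℤ) → ‖ι x‖ ≤ ((2 : ℝ)⁻¹) ^ k := by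
    intro x k hx
    by_cases h0 : x = 0
    · rw [h0, map_zero, norm_zero]
      positivity
    rw [hv x h0]
    calc (q : ℝ) ^ (x.intDegree : ℝ) ≤ (q : ℝ) ^ ((-(k : ℤ) : ℤ) : ℝ) := by
          apply Real.rpow_le_rpow_of_exponent_le (by linarith)
          exact_mod_cast hx
    _ = ((q : ℝ) ^ (k : ℕ))⁻¹ := by
          rw [Real.rpow_intCast, zpow_neg, zpow_natCast]
    _ ≤ ((2 : ℝ) ^ (k : ℕ))⁻¹ := by
          apply inv_anti₀ (by positivity)
          exact pow_le_pow_left₀ (by norm_num) hq2R k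
    _ = ((2 : ℝ)⁻¹) ^ k := by rw [inv_pow]
  -- main convergence statement
  have main : ∀ x : Kinf, ‖x‖ ≤ 1 → ∃ l : Kinf,
      HasSum (fun k => ι (ℓ k) * x ^ q ^ k) l ∧ HasSum (fun k => ι (e k) * l ^ q ^ k) x := by
    intro x hx
    have hgeo : Summable (fun k : ℕ => ((2:ℝ)⁻¹) ^ k) :=
      summable_geometric_of_lt_one (by norm_num) (by norm_num)
    have hxpow : ∀ m : ℕ, ‖x ^ q ^ m‖ ≤ 1 := by
      intro m; rw [norm_pow]; exact pow_le_one₀ (norm_nonneg x) hx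
    have hterm : ∀ m : ℕ, ‖ι (ℓ m) * x ^ q ^ m‖ ≤ ((2:ℝ)⁻¹) ^ m := by
      intro m
      rw [norm_mul]
      calc ‖ι (ℓ m)‖ * ‖x ^ q ^ m‖ ≤ ((2:ℝ)⁻¹) ^ m * 1 :=
        mul_le_mul (hnormB _ m (hldeg m)) (hxpow m) (norm_nonneg _) (by positivity)
      _ = ((2:ℝ)⁻¹) ^ m := mul_one _
    have hsumlog : Summable (fun m => ι (ℓ m) * x ^ q ^ m) :=
      Summable.of_norm (Summable.of_nonneg_of_le (fun m => norm_nonneg _) hterm hgeo)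
    obtain ⟨l, hlog⟩ := hsumlog
    refine ⟨l, hlog, ?_⟩
    set v : ℕ × ℕ → Kinf := fun km => ι (e km.1) * (ι (ℓ km.2) * x ^ q ^ km.2) ^ q ^ km.1
      with hvdef
    have hvnorm : ∀ km : ℕ × ℕ, ‖v km‖ ≤ ((2:ℝ)⁻¹) ^ km.1 * ((2:ℝ)⁻¹) ^ km.2 := by
      rintro ⟨k, m⟩
      rw [hvdef]
      simp only []
      rw [norm_mul, norm_pow]
      have h1 : ‖ι (ℓ m) * x ^ q ^ m‖ ≤ ((2:ℝ)⁻¹) ^ m := hterm m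
      have h1' : ‖ι (ℓ m) * x ^ q ^ m‖ ≤ 1 :=
        h1.trans (pow_le_one₀ (by norm_num) (by norm_num))
      have h2 : ‖ι (ℓ m) * x ^ q ^ m‖ ^ q ^ k ≤ ‖ι (ℓ m) * x ^ q ^ m‖ ^ 1 :=
        pow_le_pow_of_le_one (norm_nonneg _) h1' (hqk1 k)
      rw [pow_one] at h2
      exact mul_le_mul (hnormB _ k (hedeg k)) (h2.trans h1) (by positivity) (by positivity)
    have hsumv : Summable v :=
      Summable.of_norm (Summable.of_nonneg_of_le (fun km => norm_nonneg _) hvnorm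
        (Summable.mul_of_nonneg hgeo hgeo (fun k => by positivity) (fun m => by positivity)))
    have hfiber : ∀ N : ℕ, ∑ km ∈ Finset.HasAntidiagonal.antidiagonal N, v km = ι (S N) * x ^ q ^ N := by
      intro N
      rw [Finset.Nat.sum_antidiagonal_eq_sum_range_succ_mk]
      have hterm2 : ∀ k ∈ Finset.range (N + 1),
          v (k, N - k) = ι (e k * ℓ (N - k) ^ q ^ k) * x ^ q ^ N := by
        intro k hk
        have hkN : k ≤ N := by
          have := Finset.mem_range.mp hk; omega
        rw [hvdef]
        simp only []
        rw [mul_pow, ← map_pow, ← pow_mul, ← pow_add, map_mul]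
        rw [show N - k + k = N by omega]
        ring
      rw [Finset.sum_congr rfl hterm2, ← Finset.sum_mul, ← map_sum]
    have hfiber' : ∀ N : ℕ, ∑ km ∈ Finset.HasAntidiagonal.antidiagonal N, v km = if N = 0 then x else 0 := by
      intro N
      rw [hfiber]
      cases N with
      | zero => rw [hS0, map_one, one_mul]; simp
      | succ m => rw [hSzero m, map_zero, zero_mul]; simp
    set σ := Finset.HasAntidiagonal.sigmaAntidiagonalEquivProd (A := ℕ) with hσ
    have hsumσ : Summable (v ∘ σ) := σ.summable_iff.mpr hsumv
    have hfibsum : ∀ N : ℕ, HasSum (fun c : (Finset.HasAntidiagonal.antidiagonal N : Finset (ℕ × ℕ)) =>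
        (v ∘ σ) ⟨N, c⟩) (if N = 0 then x else 0) := by
      intro N
      have h := (Finset.HasAntidiagonal.antidiagonal N).hasSum v
      rw [hfiber' N] at h
      exact h
    have h1 : HasSum (fun N : ℕ => if N = 0 then x else 0) (∑' s, (v ∘ σ) s) :=
      hsumσ.hasSum.sigma hfibsum
    have h2 : HasSum (fun N : ℕ => if N = 0 then x else 0) x := hasSum_ite_eq 0 x
    have h3 : HasSum (v ∘ σ) x := (h1.unique h2) ▸ hsumσ.hasSum
    have h4 : HasSum v x := σ.hasSum_iff.mp h3
    have hfib2 : ∀ k : ℕ, HasSum (fun m => v (k, m)) (ι (e k) * l ^ q ^ k) :=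
      fun k => (frobHasSum _ _ k hlog).mul_left (ι (e k))
    exact h4.prod_fiberwise hfib2
  refine ⟨main, ?_⟩
  intro h x
  obtain ⟨pp, hpp⟩ := h x
  obtain ⟨l, -, h2⟩ := main _ hpp
  exact ⟨pp, l, h2⟩
end
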